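/- Let a = (a_1,…,a_d) ∈ (ℤ/2)^d be nonzero, n_1,…,n_d ≥ 3 integers, and h = gcd(n_1,…,n_d). Let B_a = A_{K_{n_1}}^{a_1} ⊗ ⋯ ⊗ A_{K_{n_d}}^{a_d} be the adjacency matrix of NEPS(K_{n_1},…,K_{n_d}; {a}). Then for every nonzero integer t, exp(-i(2tπ/h) B_a) = exp((-1)^{w(a)-1} (2tπ/h) i) · I, where w(a) is the Hamming weight of a. In particular this NEPS is periodic with period 2π/h. -/

import Mathlib

open Kronecker

/-- Adjacency matrix of the complete graph `K_n`, as a complex matrix. -/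
noncomputable def Kadj (n : ℕ) : Matrix (Fin n) (Fin n) ℂ :=
  Matrix.of fun i j => if i = j then 0 else 1

/-- Adjacency matrix of `K_2`, indexed by `ZMod 2`. -/
noncomputable def A2 : Matrix (ZMod 2) (ZMod 2) ℂ :=
  Matrix.of fun i j => if i = j then 0 else 1

/-- Kronecker product of a family of matrices. -/
noncomputable def kronC {d : ℕ} {n : Fin d → ℕ}
    (M : ∀ i, Matrix (Fin (n i)) (Fin (n i)) ℂ) :
    Matrix (∀ i, Fin (n i)) (∀ i, Fin (n i)) ℂ :=
  Matrix.of fun u v => ∏ i, M i (u i) (v i)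

/-- `M_a = A_{K_2}^{a_1} ⊗ ⋯ ⊗ A_{K_2}^{a_r}` for `a ∈ (ℤ/2)^r`. -/
noncomputable def cube {r : ℕ} (a : Fin r → ZMod 2) :
    Matrix (Fin r → ZMod 2) (Fin r → ZMod 2) ℂ :=
  Matrix.of fun u v => ∏ j, (if a j = 1 then A2 else 1) (u j) (v j)

/-- `A_{K_{n_1}}^{a_1} ⊗ ⋯ ⊗ A_{K_{n_d}}^{a_d}`. -/
noncomputable def compKron {d : ℕ} (n : Fin d → ℕ) (a : Fin d → ZMod 2) :
    Matrix (∀ i, Fin (n i)) (∀ i, Fin (n i)) ℂ :=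
  kronC fun i => if a i = 1 then Kadj (n i) else 1

/-- Hamming weight. -/
def wt {m : ℕ} (a : Fin m → ZMod 2) : ℕ :=
  (Finset.univ.filter fun i => a i = 1).card

namespace S8
noncomputable def Jm (n : ℕ) : Matrix (Fin n) (Fin n) ℂ := Matrix.of fun _ _ => 1
noncomputable def Em (n : ℕ) [NeZero n] : Matrix (Fin n) (Fin n) ℂ :=
  Matrix.of fun i j => if i = 0 ∧ j = 0 then 1 else 0

variable (n : ℕ) [NeZero n]

lemma JJ : Jm n * Jm n = (n : ℂ) • Jm n := by
  ext i j; simp [Jm, Matrix.mul_apply]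

lemma EE : Em n * Em n = Em n := by
  ext i j; simp [Em, Matrix.mul_apply, ite_and, Finset.sum_ite_eq, Finset.filter_eq', Finset.mem_univ]
  aesop

lemma EJE : Em n * Jm n * Em n = Em n := by
  ext i j; simp [Em, Jm, Matrix.mul_apply, ite_and, Finset.sum_ite_eq, Finset.filter_eq', Finset.mem_univ]
  aesop

lemma JEJ : Jm n * Em n * Jm n = Jm n := by
  ext i j; simp [Em, Jm, Matrix.mul_apply, ite_and, Finset.sum_ite_eq, Finset.filter_eq', Finset.mem_univ]

lemma JE_E : Jm n * Em n * Em n = Jm n * Em n := by rw [Matrix.mul_assoc, EE]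
lemma E_EJ : Em n * (Em n * Jm n) = Em n * Jm n := by rw [← Matrix.mul_assoc, EE]


variable {n}
lemma EEX (X : Matrix (Fin n) (Fin n) ℂ) : Em n * (Em n * X) = Em n * X := by
  rw [← Matrix.mul_assoc, EE]
lemma JJX (X : Matrix (Fin n) (Fin n) ℂ) : Jm n * (Jm n * X) = (n : ℂ) • (Jm n * X) := by
  rw [← Matrix.mul_assoc, JJ, Matrix.smul_mul]
lemma EJEX (X : Matrix (Fin n) (Fin n) ℂ) : Em n * (Jm n * (Em n * X)) = Em n * X := by
  rw [← Matrix.mul_assoc, ← Matrix.mul_assoc, Matrix.mul_assoc (Em n) (Jm n) (Em n), ← Matrix.mul_assoc, EJE]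
lemma JEJX (X : Matrix (Fin n) (Fin n) ℂ) : Jm n * (Em n * (Jm n * X)) = Jm n * X := by
  rw [← Matrix.mul_assoc, ← Matrix.mul_assoc, Matrix.mul_assoc (Jm n) (Em n) (Jm n), ← Matrix.mul_assoc, JEJ]
lemma EJE' : Em n * (Jm n * Em n) = Em n := by rw [← Matrix.mul_assoc, EJE]
lemma JEJ' : Jm n * (Em n * Jm n) = Jm n := by rw [← Matrix.mul_assoc, JEJ]
variable (n)

noncomputable def Pm : Matrix (Fin n) (Fin n) ℂ := Jm n * Em n + Em n * Jm n - 1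
noncomputable def Qm : Matrix (Fin n) (Fin n) ℂ := (n : ℂ)⁻¹ • Jm n - 1 + Em n
def ev : Fin n → ℂ := fun k => if k = 0 then (n : ℂ) - 1 else -1

lemma Dm_eq : Matrix.diagonal (ev n) = (n : ℂ) • Em n - 1 := by
  ext i j
  by_cases h : i = j <;> simp [ev, Em, Matrix.diagonal, Matrix.one_apply, h] <;> aesop

lemma PQ (hn : (n : ℂ) ≠ 0) : Pm n * Qm n = 1 := by
  simp only [Pm, Qm, Matrix.mul_add, Matrix.add_mul, Matrix.mul_sub, Matrix.sub_mul,
    Matrix.mul_smul, Matrix.smul_mul, Matrix.mul_one, Matrix.one_mul]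
  simp only [Matrix.mul_assoc, Matrix.mul_smul, Matrix.smul_mul, EEX, JJX, EJEX, JEJX,
    EE, JJ, EJE', JEJ', smul_sub, smul_add, smul_smul, inv_mul_cancel₀ hn, one_smul]
  abel

lemma QP (hn : (n : ℂ) ≠ 0) : Qm n * Pm n = 1 := by
  simp only [Pm, Qm, Matrix.mul_add, Matrix.add_mul, Matrix.mul_sub, Matrix.sub_mul,
    Matrix.mul_smul, Matrix.smul_mul, Matrix.mul_one, Matrix.one_mul]
  simp only [Matrix.mul_assoc, Matrix.mul_smul, Matrix.smul_mul, EEX, JJX, EJEX, JEJX,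
    EE, JJ, EJE', JEJ', smul_sub, smul_add, smul_smul, inv_mul_cancel₀ hn, one_smul]
  abel

lemma PDQ (hn : (n : ℂ) ≠ 0) : Pm n * Matrix.diagonal (ev n) * Qm n = Kadj n := by
  have hK : Kadj n = Jm n - 1 := by
    ext i j; by_cases h : i = j <;> simp [Kadj, Jm, Matrix.one_apply, h]
  rw [hK, Dm_eq]
  simp only [Pm, Qm, Matrix.mul_add, Matrix.add_mul, Matrix.mul_sub, Matrix.sub_mul,
    Matrix.mul_smul, Matrix.smul_mul, Matrix.mul_one, Matrix.one_mul]
  simp only [Matrix.mul_assoc, Matrix.mul_smul, Matrix.smul_mul, EEX, JJX, EJEX, JEJX,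
    EE, JJ, EJE', JEJ', smul_sub, smul_add, smul_smul, inv_mul_cancel₀ hn, one_smul]
  abel

lemma kronC_mul' {d : ℕ} {n : Fin d → ℕ} (X Y : ∀ i, Matrix (Fin (n i)) (Fin (n i)) ℂ) :
    kronC (fun i => X i * Y i) = kronC X * kronC Y := by
  ext u v
  simp only [kronC, Matrix.of_apply, Matrix.mul_apply]
  rw [Fintype.prod_sum]
  exact Finset.sum_congr rfl fun g _ => Finset.prod_mul_distrib

lemma kronC_diagonal' {d : ℕ} {n : Fin d → ℕ} (f : ∀ i, Fin (n i) → ℂ) :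
    kronC (fun i => Matrix.diagonal (f i)) = Matrix.diagonal (fun u => ∏ i, f i (u i)) := by
  ext u v
  by_cases h : u = v
  · subst h; simp [kronC]
  · obtain ⟨i, hi⟩ := Function.ne_iff.mp h
    rw [Matrix.diagonal_apply_ne _ h]
    simp only [kronC, Matrix.of_apply]
    exact Finset.prod_eq_zero (Finset.mem_univ i) (Matrix.diagonal_apply_ne _ hi)

end S8

open S8 in
theorem stmt8 (d : ℕ) (hd : 0 < d) (n : Fin d → ℕ) (hn : ∀ i, 3 ≤ n i)
    (a : Fin d → ZMod 2) (ha : a ≠ 0) (t : ℤ) (ht : t ≠ 0) :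
    NormedSpace.exp
        ((-Complex.I * ((2 * (t : ℝ) * Real.pi / ((Finset.univ.gcd n : ℕ) : ℝ) : ℝ) : ℂ)) •
          compKron n a) =
      Complex.exp ((-1 : ℂ) ^ (wt a - 1) *
          ((2 * (t : ℝ) * Real.pi / ((Finset.univ.gcd n : ℕ) : ℝ) : ℝ) : ℂ) * Complex.I) •
        (1 : Matrix (∀ i, Fin (n i)) (∀ i, Fin (n i)) ℂ) := by
  classical
  haveI : ∀ i, NeZero (n i) := fun i => ⟨by have := hn i; omega⟩
  set h : ℕ := Finset.univ.gcd n with hh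
  have hh0 : h ≠ 0 := by
    intro h0
    have := Finset.gcd_eq_zero_iff.mp (hh ▸ h0) ⟨0, hd⟩ (Finset.mem_univ _)
    have := hn ⟨0, hd⟩; omega
  have hhC : (h : ℂ) ≠ 0 := Nat.cast_ne_zero.mpr hh0
  have hone : ∀ x : ZMod 2, x ≠ 0 → x = 1 := by decide
  have hw1 : 1 ≤ wt a := by
    obtain ⟨i, hi⟩ := Function.ne_iff.mp ha
    have hmem : i ∈ Finset.univ.filter fun j => a j = 1 :=
      Finset.mem_filter.mpr ⟨Finset.mem_univ i, hone _ hi⟩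
    have := Finset.card_pos.mpr ⟨i, hmem⟩
    simpa [wt] using this
  set θ : ℂ := ((2 * (t : ℝ) * Real.pi / (h : ℝ) : ℝ) : ℂ) with hθ
  set c : ℂ := -Complex.I * θ with hc
  set s : ℂ := (-1 : ℂ) ^ (wt a - 1) * θ * Complex.I with hs
  set P' : ∀ i, Matrix (Fin (n i)) (Fin (n i)) ℂ :=
    fun i => if a i = 1 then Pm (n i) else 1 with hP'
  set Q' : ∀ i, Matrix (Fin (n i)) (Fin (n i)) ℂ :=
    fun i => if a i = 1 then Qm (n i) else 1 with hQ'
  set f : ∀ i, Fin (n i) → ℂ := fun i k => if a i = 1 then ev (n i) k else 1 with hf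
  have hnC : ∀ i, ((n i : ℂ)) ≠ 0 := fun i => Nat.cast_ne_zero.mpr (by have := hn i; omega)
  have hfac : ∀ i, (if a i = 1 then Kadj (n i) else 1)
      = P' i * Matrix.diagonal (f i) * Q' i := by
    intro i
    by_cases hai : a i = 1
    · have hd1 : Matrix.diagonal (f i) = Matrix.diagonal (ev (n i)) := by
        congr 1; funext k; simp [hf, hai]
      rw [hd1]
      simp only [hP', hQ', hai, if_pos]
      exact (PDQ (n i) (hnC i)).symm
    · simp [hP', hQ', hf, hai, Matrix.diagonal_one]
  have hPQ : kronC P' * kronC Q' = 1 := by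
    rw [← kronC_mul']
    have h1 : (fun i => P' i * Q' i) = fun i => Matrix.diagonal (fun _ : Fin (n i) => (1:ℂ)) := by
      funext i; by_cases hai : a i = 1 <;> simp [hP', hQ', hai, PQ (n i) (hnC i)]
    rw [h1, kronC_diagonal']
    simp
  have hQP : kronC Q' * kronC P' = 1 := by
    rw [← kronC_mul']
    have h1 : (fun i => Q' i * P' i) = fun i => Matrix.diagonal (fun _ : Fin (n i) => (1:ℂ)) := by
      funext i; by_cases hai : a i = 1 <;> simp [hP', hQ', hai, QP (n i) (hnC i)]
    rw [h1, kronC_diagonal']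
    simp
  set U : (Matrix (∀ i, Fin (n i)) (∀ i, Fin (n i)) ℂ)ˣ := ⟨kronC P', kronC Q', hPQ, hQP⟩ with hU
  have hB : compKron n a
      = (U : Matrix (∀ i, Fin (n i)) (∀ i, Fin (n i)) ℂ) *
          Matrix.diagonal (fun u => ∏ i, f i (u i)) *
          ((U⁻¹ : (Matrix (∀ i, Fin (n i)) (∀ i, Fin (n i)) ℂ)ˣ) :
            Matrix (∀ i, Fin (n i)) (∀ i, Fin (n i)) ℂ) := by
    rw [compKron]
    rw [show (fun i => if a i = 1 then Kadj (n i) else 1)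
        = fun i => (P' i * Matrix.diagonal (f i)) * Q' i from funext hfac]
    rw [kronC_mul', kronC_mul', kronC_diagonal']
    rfl
  set z : ∀ i, Fin (n i) → ℤ :=
    fun i k => if a i = 1 then (if k = 0 then (n i : ℤ) - 1 else -1) else 1 with hz
  have hfz : ∀ (i) (k : Fin (n i)), f i k = ((z i k : ℤ) : ℂ) := by
    intro i k
    by_cases hai : a i = 1 <;> by_cases hk : k = 0 <;>
      simp [hf, hz, hai, hk, ev] <;> push_cast <;> ring
  have key : ∀ u : ∀ i, Fin (n i), Complex.exp (c * ∏ i, f i (u i)) = Complex.exp s := by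
    intro u
    set Z : ℤ := ∏ i, z i (u i) with hZ
    have hcast : (∏ i, f i (u i)) = ((Z : ℤ) : ℂ) := by
      rw [hZ]; push_cast; exact Finset.prod_congr rfl fun i _ => hfz i (u i)
    have hzz : ∀ i : Fin d, ((z i (u i) : ℤ) : ZMod h) = (if a i = 1 then -1 else 1) := by
      intro i
      have hni : ((n i : ℕ) : ZMod h) = 0 :=
        (ZMod.natCast_eq_zero_iff _ _).mpr (hh ▸ Finset.gcd_dvd (Finset.mem_univ i))
      by_cases hai : a i = 1 <;> by_cases hk : (u i) = 0 <;>
        simp [hz, hai, hk] <;> push_cast <;> rw [hni] <;> ring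
    have hmod : ((Z : ℤ) : ZMod h) = (-1 : ZMod h) ^ (wt a) := by
      rw [hZ]; push_cast
      rw [Finset.prod_congr rfl fun i _ => hzz i, Finset.prod_ite, Finset.prod_const,
        Finset.prod_const, one_pow, mul_one]
      rfl
    have hdvd : (h : ℤ) ∣ Z - (-1) ^ (wt a) := by
      apply (ZMod.intCast_zmod_eq_zero_iff_dvd _ _).mp
      push_cast
      rw [hmod]
      ring
    obtain ⟨m, hm⟩ := hdvd
    rw [hcast, Complex.exp_eq_exp_iff_exists_int]
    refine ⟨-(t * m), ?_⟩
    have hZc : (Z : ℂ) = (-1 : ℂ) ^ (wt a) + (h : ℂ) * (m : ℂ) := by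
      have h2 := congrArg (fun x : ℤ => (x : ℂ)) hm
      push_cast at h2
      linear_combination h2
    have hpow : (-1 : ℂ) ^ (wt a) = -(-1 : ℂ) ^ (wt a - 1) := by
      conv_lhs => rw [show wt a = (wt a - 1) + 1 by omega]
      rw [pow_succ]; ring
    have hπ : θ = 2 * (t : ℂ) * (Real.pi : ℂ) / (h : ℂ) := by
      rw [hθ]; push_cast; ring
    rw [hc, hs, hZc, hpow, hπ]
    field_simp
    push_cast
    ring
  rw [hB]
  have hsm : c • ((U : Matrix (∀ i, Fin (n i)) (∀ i, Fin (n i)) ℂ) *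
        Matrix.diagonal (fun u => ∏ i, f i (u i)) *
        ((U⁻¹ : (Matrix (∀ i, Fin (n i)) (∀ i, Fin (n i)) ℂ)ˣ) :
          Matrix (∀ i, Fin (n i)) (∀ i, Fin (n i)) ℂ))
      = (U : Matrix (∀ i, Fin (n i)) (∀ i, Fin (n i)) ℂ) *
        Matrix.diagonal (c • fun u => ∏ i, f i (u i)) *
        ((U⁻¹ : (Matrix (∀ i, Fin (n i)) (∀ i, Fin (n i)) ℂ)ˣ) :
          Matrix (∀ i, Fin (n i)) (∀ i, Fin (n i)) ℂ) := by
    rw [Matrix.diagonal_smul]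
    rw [← smul_mul_assoc, ← mul_smul_comm]
  rw [hsm, Matrix.exp_units_conj, Matrix.exp_diagonal]
  have hexp : (NormedSpace.exp (c • fun u : ∀ i, Fin (n i) => ∏ i, f i (u i)))
      = fun _ => Complex.exp s := by
    rw [Pi.exp_def]
    funext u
    simp only [Pi.smul_apply, smul_eq_mul]
    rw [← Complex.exp_eq_exp_ℂ]
    exact key u
  rw [hexp]
  have hdiag1 : Matrix.diagonal (fun _ : ∀ i, Fin (n i) => Complex.exp s)
      = Complex.exp s • (1 : Matrix (∀ i, Fin (n i)) (∀ i, Fin (n i)) ℂ) := by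
    ext u v; by_cases huv : u = v <;> simp [Matrix.diagonal, Matrix.one_apply, huv]
  rw [hdiag1, mul_smul_comm, smul_mul_assoc, mul_one, Units.mul_inv]
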